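/- arXiv:math/0108145 — 3 statements merged into one kernel-verified Lean document; each statement's English description precedes it below -/
import Mathlib

section
/- Let f = ∑_{k≥0} a_k X^k ∈ ℂ[[X]] be of Gevrey class (i.e., f ∈ 𝒢) with nonzero constant coefficient a_0 ≠ 0. Then f is invertible in ℂ[[X]] and its inverse again lies in 𝒢. In other words, every element of 𝒢 with nonzero constant term is a unit of the subring 𝒢. -/
/-- A formal power series `f = ∑ aₖ Xᵏ ∈ ℂ[[X]]` is of *Gevrey class* if there is `r > 0`
such that `∑ (‖aₖ‖/k!)·rᵏ` is summable (the model of `ℂ{{∂ₜ⁻¹}}`). -/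
def GevreyClass (f : PowerSeries ℂ) : Prop :=
  ∃ r : ℝ, 0 < r ∧
    Summable fun k : ℕ => ‖PowerSeries.coeff k f‖ / (Nat.factorial k : ℝ) * r ^ k

set_option maxHeartbeats 1000000 in
/-- Every Gevrey-class power series with nonzero constant coefficient
is invertible in `ℂ[[X]]`, with Gevrey-class inverse; i.e. it is a unit of `𝒢`. -/
theorem gevreyClass_isUnit_of_constantCoeff_ne_zero
    (f : PowerSeries ℂ) (hf : GevreyClass f)
    (h0 : PowerSeries.constantCoeff f ≠ 0) :
    ∃ g : PowerSeries ℂ, GevreyClass g ∧ f * g = 1 ∧ g * f = 1 := by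
  classical
  obtain ⟨r, hr, hsum⟩ := hf
  set a : ℕ → ℂ := fun k => PowerSeries.coeff k f with ha
  -- A uniform bound on the coefficients of `f`
  set C : ℝ := (∑' k, ‖a k‖ / (Nat.factorial k : ℝ) * r ^ k) + 1 with hC
  have htsum_nonneg : 0 ≤ ∑' k, ‖a k‖ / (Nat.factorial k : ℝ) * r ^ k :=
    tsum_nonneg fun k => by positivity
  have hCpos : 0 < C := by rw [hC]; linarith
  have hCb : ∀ k : ℕ, ‖a k‖ * r ^ k ≤ C * (Nat.factorial k : ℝ) := by
    intro k
    have h1 : ‖a k‖ / (Nat.factorial k : ℝ) * r ^ k ≤ C := by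
      have := Summable.le_tsum hsum k (fun j _ => by positivity)
      rw [hC]; linarith
    have hfp : (0 : ℝ) < (Nat.factorial k : ℝ) := by
      exact_mod_cast Nat.factorial_pos k
    rw [div_mul_eq_mul_div, div_le_iff₀ hfp] at h1
    linarith
  -- the inverse
  set g : PowerSeries ℂ := f⁻¹ with hg
  have hfg : f * g = 1 := PowerSeries.mul_inv_cancel f h0
  have hgf : g * f = 1 := by rw [mul_comm]; exact hfg
  set b : ℕ → ℂ := fun k => PowerSeries.coeff k g with hb
  set c : ℝ := ‖PowerSeries.constantCoeff f‖⁻¹ with hc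
  have ha0 : (0 : ℝ) < ‖PowerSeries.constantCoeff f‖ := norm_pos_iff.2 h0
  have hcpos : 0 < c := by positivity
  have ha0' : ‖a 0‖ = ‖PowerSeries.constantCoeff f‖ := by
    simp [ha, PowerSeries.coeff_zero_eq_constantCoeff]
  -- choice of geometric ratio
  set q : ℝ := 1 / (1 + 2 * (c * C)) with hq
  have hccC : 0 < c * C := mul_pos hcpos hCpos
  have hq0 : 0 < q := by positivity
  have hq1 : q < 1 := by
    rw [hq, div_lt_one (by linarith)]; linarith
  have h1q : 0 < 1 - q := by linarith
  set t : ℝ := q * r with ht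
  have htpos : 0 < t := mul_pos hq0 hr
  -- basic recursion for coefficients of the inverse
  have hb0 : a 0 * b 0 = 1 := by
    have := congrArg (PowerSeries.constantCoeff) hfg
    rw [map_mul, map_one] at this
    simpa [ha, hb, PowerSeries.coeff_zero_eq_constantCoeff] using this
  have hnb0 : ‖b 0‖ = c := by
    have hmul : ‖a 0‖ * ‖b 0‖ = 1 := by rw [← norm_mul, hb0, norm_one]
    rw [hc, ← ha0']
    rw [mul_comm] at hmul
    exact eq_inv_of_mul_eq_one_left hmul
  have hrec : ∀ n : ℕ, a 0 * b (n + 1) = -∑ i ∈ Finset.range (n + 1), a (i + 1) * b (n - i) := by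
    intro n
    have h1 : PowerSeries.coeff (n + 1) (f * g) = 0 := by
      rw [hfg, PowerSeries.coeff_one]; simp
    rw [PowerSeries.coeff_mul, Finset.Nat.sum_antidiagonal_eq_sum_range_succ
      (fun i j => PowerSeries.coeff i f * PowerSeries.coeff j g)] at h1
    rw [Finset.sum_range_succ'] at h1
    simp only [Nat.sub_zero, Nat.succ_sub_succ_eq_sub] at h1
    have h2 : ∑ i ∈ Finset.range (n + 1), a (i + 1) * b (n - i) + a 0 * b (n + 1) = 0 := by
      convert h1 using 2
    linear_combination h2
  -- the key estimate, by strong induction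
  have key : ∀ n : ℕ, ‖b n‖ * t ^ n ≤ c * (Nat.factorial n : ℝ) := by
    intro n
    induction n using Nat.strong_induction_on with
    | _ n IH =>
      match n with
      | 0 => simp [hnb0]
      | (m + 1) =>
        have hnorm : ‖a 0‖ * ‖b (m + 1)‖ ≤
            ∑ i ∈ Finset.range (m + 1), ‖a (i + 1)‖ * ‖b (m - i)‖ := by
          rw [← norm_mul, hrec m, norm_neg]
          calc ‖∑ i ∈ Finset.range (m + 1), a (i + 1) * b (m - i)‖
              ≤ ∑ i ∈ Finset.range (m + 1), ‖a (i + 1) * b (m - i)‖ := norm_sum_le _ _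
            _ = ∑ i ∈ Finset.range (m + 1), ‖a (i + 1)‖ * ‖b (m - i)‖ := by
                simp [norm_mul]
        have hterm : ∀ i ∈ Finset.range (m + 1),
            ‖a (i + 1)‖ * ‖b (m - i)‖ * t ^ (m + 1) ≤
            C * c * ((Nat.factorial (m + 1) : ℝ)) * q ^ (i + 1) := by
          intro i hi
          have him : i ≤ m := Nat.lt_succ_iff.mp (Finset.mem_range.mp hi)
          have hsplit : t ^ (m + 1) = t ^ (i + 1) * t ^ (m - i) := by
            rw [← pow_add]; congr 1; omega
          have hstep1 : ‖a (i + 1)‖ * t ^ (i + 1) ≤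
              C * (Nat.factorial (i + 1) : ℝ) * q ^ (i + 1) := by
            have htq : t ^ (i + 1) = q ^ (i + 1) * r ^ (i + 1) := by rw [ht, mul_pow]
            rw [htq]
            calc ‖a (i + 1)‖ * (q ^ (i + 1) * r ^ (i + 1))
                = ‖a (i + 1)‖ * r ^ (i + 1) * q ^ (i + 1) := by ring
              _ ≤ C * (Nat.factorial (i + 1) : ℝ) * q ^ (i + 1) :=
                  mul_le_mul_of_nonneg_right (hCb (i + 1)) (by positivity)
          have hstep2 : ‖b (m - i)‖ * t ^ (m - i) ≤ c * (Nat.factorial (m - i) : ℝ) :=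
            IH (m - i) (by omega)
          have hfact : ((Nat.factorial (i + 1) : ℝ)) * (Nat.factorial (m - i) : ℝ) ≤
              (Nat.factorial (m + 1) : ℝ) := by
            have hd : Nat.factorial (i + 1) * Nat.factorial (m - i) ∣ Nat.factorial (m + 1) := by
              have := Nat.factorial_mul_factorial_dvd_factorial
                (show i + 1 ≤ m + 1 by omega)
              simpa [Nat.succ_sub_succ] using this
            exact_mod_cast Nat.le_of_dvd (Nat.factorial_pos _) hd
          calc ‖a (i + 1)‖ * ‖b (m - i)‖ * t ^ (m + 1)
              = (‖a (i + 1)‖ * t ^ (i + 1)) * (‖b (m - i)‖ * t ^ (m - i)) := by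
                rw [hsplit]; ring
            _ ≤ (C * (Nat.factorial (i + 1) : ℝ) * q ^ (i + 1)) *
                  (c * (Nat.factorial (m - i) : ℝ)) := by
                apply mul_le_mul hstep1 hstep2 (by positivity) (by positivity)
            _ = C * c * ((Nat.factorial (i + 1) : ℝ) * (Nat.factorial (m - i) : ℝ)) *
                  q ^ (i + 1) := by ring
            _ ≤ C * c * (Nat.factorial (m + 1) : ℝ) * q ^ (i + 1) := by gcongr
        have hqsum : ∑ i ∈ Finset.range (m + 1), q ^ (i + 1) ≤ q * (1 - q)⁻¹ := by
          have h1 : ∑ i ∈ Finset.range (m + 1), q ^ (i + 1) =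
              q * ∑ i ∈ Finset.range (m + 1), q ^ i := by
            rw [Finset.mul_sum]
            exact Finset.sum_congr rfl fun i _ => by rw [pow_succ]; ring
          have h2 : ∑ i ∈ Finset.range (m + 1), q ^ i ≤ (1 - q)⁻¹ := by
            have := Summable.sum_le_tsum (Finset.range (m + 1)) (fun i _ => by positivity)
              (summable_geometric_of_lt_one hq0.le hq1)
            rwa [tsum_geometric_of_lt_one hq0.le hq1] at this
          rw [h1]
          exact mul_le_mul_of_nonneg_left h2 hq0.le
        have hsum2 : ∑ i ∈ Finset.range (m + 1), ‖a (i + 1)‖ * ‖b (m - i)‖ * t ^ (m + 1) ≤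
            C * c * (Nat.factorial (m + 1) : ℝ) * (q * (1 - q)⁻¹) := by
          calc ∑ i ∈ Finset.range (m + 1), ‖a (i + 1)‖ * ‖b (m - i)‖ * t ^ (m + 1)
              ≤ ∑ i ∈ Finset.range (m + 1),
                  C * c * (Nat.factorial (m + 1) : ℝ) * q ^ (i + 1) :=
                Finset.sum_le_sum hterm
            _ = C * c * (Nat.factorial (m + 1) : ℝ) *
                  ∑ i ∈ Finset.range (m + 1), q ^ (i + 1) := by rw [Finset.mul_sum]
            _ ≤ C * c * (Nat.factorial (m + 1) : ℝ) * (q * (1 - q)⁻¹) := by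
                apply mul_le_mul_of_nonneg_left hqsum (by positivity)
        have hqq : q * (1 - q)⁻¹ = 1 / (2 * (c * C)) := by
          rw [hq]
          rw [show (1 : ℝ) - 1 / (1 + 2 * (c * C)) = (2 * (c * C)) / (1 + 2 * (c * C)) by
            field_simp; ring]
          field_simp
        have hmain : ‖a 0‖ * (‖b (m + 1)‖ * t ^ (m + 1)) ≤
            C * c * (Nat.factorial (m + 1) : ℝ) * (q * (1 - q)⁻¹) := by
          calc ‖a 0‖ * (‖b (m + 1)‖ * t ^ (m + 1))
              = (‖a 0‖ * ‖b (m + 1)‖) * t ^ (m + 1) := by ring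
            _ ≤ (∑ i ∈ Finset.range (m + 1), ‖a (i + 1)‖ * ‖b (m - i)‖) * t ^ (m + 1) := by
                apply mul_le_mul_of_nonneg_right hnorm (by positivity)
            _ = ∑ i ∈ Finset.range (m + 1), ‖a (i + 1)‖ * ‖b (m - i)‖ * t ^ (m + 1) := by
                rw [Finset.sum_mul]
            _ ≤ _ := hsum2
        have hfin : C * c * (Nat.factorial (m + 1) : ℝ) * (q * (1 - q)⁻¹) ≤
            ‖a 0‖ * (c * (Nat.factorial (m + 1) : ℝ)) := by
          rw [hqq, ha0']
          have hfp : (0 : ℝ) < (Nat.factorial (m + 1) : ℝ) := by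
            exact_mod_cast Nat.factorial_pos (m + 1)
          have hca : ‖PowerSeries.constantCoeff f‖ = c⁻¹ := by
            rw [hc, inv_inv]
          rw [hca]
          rw [show C * c * (Nat.factorial (m + 1) : ℝ) * (1 / (2 * (c * C))) =
              c * (Nat.factorial (m + 1) : ℝ) / (2 * c) by field_simp]
          rw [show c⁻¹ * (c * (Nat.factorial (m + 1) : ℝ)) =
              c * (Nat.factorial (m + 1) : ℝ) / c by field_simp]
          apply div_le_div_of_nonneg_left (by positivity) hcpos (by linarith)
        have := le_trans hmain hfin
        have ha0pos : (0 : ℝ) < ‖a 0‖ := by rw [ha0']; exact ha0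
        exact le_of_mul_le_mul_left this ha0pos
  -- conclude summability for the inverse at radius t/2
  refine ⟨g, ⟨t / 2, by positivity, ?_⟩, hfg, hgf⟩
  refine Summable.of_nonneg_of_le (fun k => by positivity) (fun k => ?_)
    ((summable_geometric_of_lt_one (by norm_num : (0:ℝ) ≤ 1/2) (by norm_num)).mul_left c)
  have hfp : (0 : ℝ) < (Nat.factorial k : ℝ) := by exact_mod_cast Nat.factorial_pos k
  have h1 : ‖PowerSeries.coeff k g‖ / (Nat.factorial k : ℝ) * (t / 2) ^ k =
      (‖b k‖ * t ^ k) / (Nat.factorial k : ℝ) * (1 / 2 : ℝ) ^ k := by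
    rw [div_pow]
    field_simp [hb]
    have h2k : (2 : ℝ) ^ k * (1 / 2) ^ k = 1 := by rw [← mul_pow]; norm_num
    rw [mul_right_comm (2 ^ k : ℝ) ‖b k‖, h2k, one_mul, hb]
  rw [h1]
  have h2 : (‖b k‖ * t ^ k) / (Nat.factorial k : ℝ) ≤ c := by
    rw [div_le_iff₀ hfp]
    exact key k
  exact mul_le_mul_of_nonneg_right h2 (by positivity)
end

section
/- The ring 𝒢 of Gevrey-class formal power series (the model of the ring ℂ{{∂ₜ⁻¹}} of microdifferential operators with constant coefficients) is a discrete valuation ring: it is a local integral domain that is a principal ideal ring, with maximal ideal generated by X, and every nonzero element of 𝒢 can be written uniquely as X^n·u with n ∈ ℕ and u a unit of 𝒢. -/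
open PowerSeries Finset

/-- coefficient bound form -/
def GBnd (f : PowerSeries ℂ) (C ρ : ℝ) : Prop :=
  ∀ k : ℕ, ‖PowerSeries.coeff k f‖ ≤ C * ρ ^ k * (Nat.factorial k : ℝ)

lemma gevrey_iff_bnd {f : PowerSeries ℂ} :
    GevreyClass f ↔ ∃ C ρ : ℝ, 0 ≤ C ∧ 0 < ρ ∧ GBnd f C ρ := by
  constructor
  · rintro ⟨r, hr, hs⟩
    refine ⟨∑' k : ℕ, ‖PowerSeries.coeff k f‖ / (Nat.factorial k : ℝ) * r ^ k, 1/r,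
      tsum_nonneg (fun k => by positivity), by positivity, fun k => ?_⟩
    have h1 : ‖PowerSeries.coeff k f‖ / (Nat.factorial k : ℝ) * r ^ k ≤
        ∑' k : ℕ, ‖PowerSeries.coeff k f‖ / (Nat.factorial k : ℝ) * r ^ k :=
      Summable.le_tsum hs k fun _ _ => by positivity
    have hk : (Nat.factorial k : ℝ) ≠ 0 := by positivity
    have hr' : r ≠ 0 := ne_of_gt hr
    have key : ‖PowerSeries.coeff k f‖ =
        (‖PowerSeries.coeff k f‖ / (Nat.factorial k : ℝ) * r ^ k) * ((1/r) ^ k * (Nat.factorial k : ℝ)) := by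
      field_simp
      rw [one_div, inv_pow, mul_assoc, mul_inv_cancel₀ (pow_ne_zero k hr'), mul_one]
    rw [key]
    have : (0:ℝ) ≤ (1/r) ^ k * (Nat.factorial k : ℝ) := by positivity
    calc _ ≤ (∑' k : ℕ, ‖PowerSeries.coeff k f‖ / (Nat.factorial k : ℝ) * r ^ k) *
        ((1/r) ^ k * (Nat.factorial k : ℝ)) := by
          exact mul_le_mul_of_nonneg_right h1 this
      _ = _ := by ring
  · rintro ⟨C, ρ, hC, hρ, hb⟩
    refine ⟨1/(2*ρ), by positivity, ?_⟩
    refine Summable.of_nonneg_of_le (fun k => by positivity) (fun k => ?_)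
      ((summable_geometric_of_lt_one (by norm_num) (by norm_num : (1/2:ℝ) < 1)).mul_left C)
    have hk : (0:ℝ) < (Nat.factorial k : ℝ) := by positivity
    calc ‖PowerSeries.coeff k f‖ / (Nat.factorial k : ℝ) * (1/(2*ρ)) ^ k
        ≤ (C * ρ ^ k * (Nat.factorial k : ℝ)) / (Nat.factorial k : ℝ) * (1/(2*ρ)) ^ k := by
          gcongr
          exact hb k
      _ = C * (1/2) ^ k := by
          rw [mul_div_assoc, div_self (ne_of_gt hk), mul_one, mul_assoc, ← mul_pow]
          congr 2
          field_simp

open PowerSeries Finset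

lemma fact_mul_fact_le {i k : ℕ} (h : i ≤ k) :
    (Nat.factorial i : ℝ) * (Nat.factorial (k - i) : ℝ) ≤ (Nat.factorial k : ℝ) := by
  exact_mod_cast Nat.le_of_dvd (Nat.factorial_pos k)
    (Nat.factorial_mul_factorial_dvd_factorial h)

lemma gevrey_zero : GevreyClass 0 := by
  rw [gevrey_iff_bnd]
  exact ⟨0, 1, le_refl 0, one_pos, fun k => by simp⟩

lemma gevrey_one : GevreyClass 1 := by
  rw [gevrey_iff_bnd]
  refine ⟨1, 1, zero_le_one, one_pos, fun k => ?_⟩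
  rw [PowerSeries.coeff_one]
  split <;> simp [Nat.one_le_iff_ne_zero, Nat.factorial_ne_zero] <;> positivity

lemma gevrey_X : GevreyClass PowerSeries.X := by
  rw [gevrey_iff_bnd]
  refine ⟨1, 1, zero_le_one, one_pos, fun k => ?_⟩
  rw [PowerSeries.coeff_X]
  split <;> simp [Nat.one_le_iff_ne_zero, Nat.factorial_ne_zero] <;> positivity

lemma gevrey_add {f g : PowerSeries ℂ} (hf : GevreyClass f) (hg : GevreyClass g) :
    GevreyClass (f + g) := by
  rw [gevrey_iff_bnd] at *
  obtain ⟨C, ρ, hC, hρ, hb⟩ := hf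
  obtain ⟨D, σ, hD, hσ, hb'⟩ := hg
  refine ⟨C + D, max ρ σ, by positivity, lt_max_of_lt_left hρ, fun k => ?_⟩
  rw [map_add]
  calc ‖PowerSeries.coeff k f + PowerSeries.coeff k g‖
      ≤ ‖PowerSeries.coeff k f‖ + ‖PowerSeries.coeff k g‖ := norm_add_le _ _
    _ ≤ C * ρ ^ k * (Nat.factorial k : ℝ) + D * σ ^ k * (Nat.factorial k : ℝ) :=
        add_le_add (hb k) (hb' k)
    _ ≤ C * (max ρ σ) ^ k * (Nat.factorial k : ℝ) + D * (max ρ σ) ^ k * (Nat.factorial k : ℝ) := by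
        gcongr
        · exact le_max_left _ _
        · exact le_max_right _ _
    _ = (C + D) * (max ρ σ) ^ k * (Nat.factorial k : ℝ) := by ring

lemma gevrey_neg {f : PowerSeries ℂ} (hf : GevreyClass f) : GevreyClass (-f) := by
  rw [gevrey_iff_bnd] at *
  obtain ⟨C, ρ, hC, hρ, hb⟩ := hf
  exact ⟨C, ρ, hC, hρ, fun k => by rw [map_neg, norm_neg]; exact hb k⟩

lemma gevrey_mul {f g : PowerSeries ℂ} (hf : GevreyClass f) (hg : GevreyClass g) :
    GevreyClass (f * g) := by
  rw [gevrey_iff_bnd] at *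
  obtain ⟨C, ρ, hC, hρ, hb⟩ := hf
  obtain ⟨D, σ, hD, hσ, hb'⟩ := hg
  set τ := max ρ σ with hτdef
  have hτ : 0 < τ := lt_max_of_lt_left hρ
  refine ⟨C * D, 2 * τ, by positivity, by positivity, fun k => ?_⟩
  rw [PowerSeries.coeff_mul, Finset.Nat.sum_antidiagonal_eq_sum_range_succ_mk]
  calc ‖∑ i ∈ range (k+1), PowerSeries.coeff i f * PowerSeries.coeff (k - i) g‖
      ≤ ∑ i ∈ range (k+1), ‖PowerSeries.coeff i f * PowerSeries.coeff (k - i) g‖ :=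
        norm_sum_le _ _
    _ ≤ ∑ _i ∈ range (k+1), C * D * τ ^ k * (Nat.factorial k : ℝ) := by
        refine Finset.sum_le_sum fun i hi => ?_
        have hik : i ≤ k := Nat.lt_succ_iff.mp (Finset.mem_range.mp hi)
        rw [norm_mul]
        calc ‖PowerSeries.coeff i f‖ * ‖PowerSeries.coeff (k - i) g‖
            ≤ (C * ρ ^ i * (Nat.factorial i : ℝ)) * (D * σ ^ (k-i) * (Nat.factorial (k-i) : ℝ)) :=
              mul_le_mul (hb i) (hb' (k-i)) (norm_nonneg _) (by positivity)
          _ ≤ (C * τ ^ i * (Nat.factorial i : ℝ)) * (D * τ ^ (k-i) * (Nat.factorial (k-i) : ℝ)) := by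
              gcongr
              · exact le_max_left _ _
              · exact le_max_right _ _
          _ = C * D * (τ ^ i * τ ^ (k-i)) * ((Nat.factorial i : ℝ) * (Nat.factorial (k-i) : ℝ)) := by
              ring
          _ ≤ C * D * τ ^ k * (Nat.factorial k : ℝ) := by
              rw [← pow_add, Nat.add_sub_cancel' hik]
              have h2 : (0:ℝ) ≤ C * D * τ ^ k := by positivity
              exact mul_le_mul_of_nonneg_left (fact_mul_fact_le hik) h2
    _ = (k+1 : ℝ) * (C * D * τ ^ k * (Nat.factorial k : ℝ)) := by
        rw [Finset.sum_const, Finset.card_range]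
        push_cast
        ring
    _ ≤ (2:ℝ) ^ k * (C * D * τ ^ k * (Nat.factorial k : ℝ)) := by
        have h2 : (0:ℝ) ≤ C * D * τ ^ k * (Nat.factorial k : ℝ) := by positivity
        have h3 : (k+1 : ℝ) ≤ (2:ℝ) ^ k := by exact_mod_cast Nat.succ_le_of_lt (Nat.lt_two_pow_self (n := k))
        exact mul_le_mul_of_nonneg_right h3 h2
    _ = C * D * (2 * τ) ^ k * (Nat.factorial k : ℝ) := by
        rw [mul_pow]
        ring
lemma geo_half_le (m : ℕ) : ∑ i ∈ Finset.range m, (1/2:ℝ)^i ≤ 2 := by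
  rw [geom_sum_eq (by norm_num : (1/2:ℝ) ≠ 1)]
  have h : (0:ℝ) ≤ (1/2:ℝ)^m := by positivity
  rw [div_le_iff_of_neg (by norm_num : (1/2:ℝ) - 1 < 0)]
  linarith

lemma gevrey_inv {f : PowerSeries ℂ} (hf : GevreyClass f)
    (h0 : PowerSeries.constantCoeff f ≠ 0) : GevreyClass f⁻¹ := by
  rw [gevrey_iff_bnd] at *
  obtain ⟨C, ρ, hC, hρ, hb⟩ := hf
  set M : ℝ := ‖(PowerSeries.constantCoeff f)⁻¹‖ with hMdef
  have hM : 0 ≤ M := norm_nonneg _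
  set D : ℝ := 3 * ρ * (1 + C * M) with hDdef
  have hCM : (0:ℝ) ≤ C * M := mul_nonneg hC hM
  have hD : 0 < D := by positivity
  have hρD : 2 * ρ ≤ D := by nlinarith
  refine ⟨M, D, hM, hD, ?_⟩
  intro k
  induction k using Nat.strong_induction_on with
  | _ k ih =>
    rcases Nat.eq_zero_or_pos k with hk | hk
    · subst hk
      rw [PowerSeries.coeff_inv, if_pos rfl]
      simp [hMdef]
    · obtain ⟨n, rfl⟩ := Nat.exists_eq_succ_of_ne_zero (Nat.pos_iff_ne_zero.mp hk)
      rw [PowerSeries.coeff_inv, if_neg (Nat.succ_ne_zero n), norm_mul, norm_neg,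
        Finset.Nat.sum_antidiagonal_eq_sum_range_succ_mk, Finset.sum_range_succ']
      have hz : (if n + 1 - 0 < n + 1 then
          PowerSeries.coeff 0 f * PowerSeries.coeff (n + 1 - 0) f⁻¹ else 0) = 0 := by
        rw [if_neg]
        simp
      rw [hz, add_zero, ← hMdef]
      have hbound : ∀ i ∈ Finset.range (n+1),
          ‖if n + 1 - (i + 1) < n + 1 then
              PowerSeries.coeff (i+1) f * PowerSeries.coeff (n + 1 - (i+1)) f⁻¹ else 0‖
            ≤ C * M * ρ * D ^ n * (Nat.factorial (n+1) : ℝ) * (1/2:ℝ)^i := by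
        intro i hi
        have hin : i ≤ n := Nat.lt_succ_iff.mp (Finset.mem_range.mp hi)
        rw [if_pos (by omega)]
        have hsub : n + 1 - (i + 1) = n - i := by omega
        rw [hsub, norm_mul]
        have h2 : ‖PowerSeries.coeff (n-i) f⁻¹‖ ≤ M * D ^ (n-i) * (Nat.factorial (n-i) : ℝ) :=
          ih (n-i) (by omega)
        have hfac : (Nat.factorial (i+1) : ℝ) * (Nat.factorial (n-i) : ℝ)
            ≤ (Nat.factorial (n+1) : ℝ) := by
          have h := fact_mul_fact_le (show i+1 ≤ n+1 by omega)
          have e : n + 1 - (i+1) = n - i := by omega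
          rwa [e] at h
        have hpow : ρ ^ (i+1) * D ^ (n-i) ≤ ρ * (1/2:ℝ)^i * D ^ n := by
          have hρle : ρ ≤ D/2 := by linarith
          have hDpow : D ^ i * D ^ (n-i) = D ^ n := by
            rw [← pow_add, Nat.add_sub_cancel' hin]
          calc ρ ^ (i+1) * D ^ (n-i) = ρ * ρ^i * D^(n-i) := by rw [pow_succ]; ring
            _ ≤ ρ * (D/2)^i * D^(n-i) := by
                have := pow_le_pow_left₀ hρ.le hρle i
                have hd : (0:ℝ) ≤ D^(n-i) := by positivity
                nlinarith [mul_le_mul_of_nonneg_left this hρ.le]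
            _ = ρ * (1/2:ℝ)^i * D^n := by
                rw [← hDpow, div_pow]
                rw [one_div, inv_pow, div_eq_mul_inv]
                ring
        calc ‖PowerSeries.coeff (i+1) f‖ * ‖PowerSeries.coeff (n-i) f⁻¹‖
            ≤ (C * ρ ^ (i+1) * (Nat.factorial (i+1) : ℝ)) *
              (M * D ^ (n-i) * (Nat.factorial (n-i) : ℝ)) :=
              mul_le_mul (hb (i+1)) h2 (norm_nonneg _) (by positivity)
          _ = (C * M * (ρ ^ (i+1) * D ^ (n-i))) *
              ((Nat.factorial (i+1) : ℝ) * (Nat.factorial (n-i) : ℝ)) := by ring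
          _ ≤ (C * M * (ρ * (1/2:ℝ)^i * D ^ n)) * (Nat.factorial (n+1) : ℝ) := by
              refine mul_le_mul (mul_le_mul_of_nonneg_left hpow hCM) hfac (by positivity) ?_
              positivity
          _ = C * M * ρ * D ^ n * (Nat.factorial (n+1) : ℝ) * (1/2:ℝ)^i := by ring
      calc M * ‖∑ i ∈ Finset.range (n+1),
            if n + 1 - (i + 1) < n + 1 then
              PowerSeries.coeff (i+1) f * PowerSeries.coeff (n + 1 - (i+1)) f⁻¹ else 0‖
          ≤ M * ∑ i ∈ Finset.range (n+1),
              ‖if n + 1 - (i + 1) < n + 1 then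
                PowerSeries.coeff (i+1) f * PowerSeries.coeff (n + 1 - (i+1)) f⁻¹ else 0‖ :=
            mul_le_mul_of_nonneg_left (norm_sum_le _ _) hM
        _ ≤ M * ∑ i ∈ Finset.range (n+1),
              C * M * ρ * D ^ n * (Nat.factorial (n+1) : ℝ) * (1/2:ℝ)^i :=
            mul_le_mul_of_nonneg_left (Finset.sum_le_sum hbound) hM
        _ = M * ((C * M * ρ * D ^ n * (Nat.factorial (n+1) : ℝ)) *
              ∑ i ∈ Finset.range (n+1), (1/2:ℝ)^i) := by
            rw [← Finset.mul_sum]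
        _ ≤ M * ((C * M * ρ * D ^ n * (Nat.factorial (n+1) : ℝ)) * 2) := by
            have hg := geo_half_le (n+1)
            have hpos : (0:ℝ) ≤ C * M * ρ * D ^ n * (Nat.factorial (n+1) : ℝ) := by positivity
            exact mul_le_mul_of_nonneg_left (mul_le_mul_of_nonneg_left hg hpos) hM
        _ ≤ M * D ^ (n+1) * (Nat.factorial (n+1) : ℝ) := by
            have h2 : 2 * (C * M * ρ) ≤ D := by nlinarith
            have hinner : (C * M * ρ * D ^ n * (Nat.factorial (n+1) : ℝ)) * 2
                ≤ D ^ (n+1) * (Nat.factorial (n+1) : ℝ) := by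
              calc (C * M * ρ * D ^ n * (Nat.factorial (n+1) : ℝ)) * 2
                  = (2 * (C * M * ρ)) * (D ^ n * (Nat.factorial (n+1) : ℝ)) := by ring
                _ ≤ D * (D ^ n * (Nat.factorial (n+1) : ℝ)) :=
                    mul_le_mul_of_nonneg_right h2 (by positivity)
                _ = D ^ (n+1) * (Nat.factorial (n+1) : ℝ) := by rw [pow_succ]; ring
            calc M * ((C * M * ρ * D ^ n * (Nat.factorial (n+1) : ℝ)) * 2)
                ≤ M * (D ^ (n+1) * (Nat.factorial (n+1) : ℝ)) :=
                  mul_le_mul_of_nonneg_left hinner hM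
              _ = M * D ^ (n+1) * (Nat.factorial (n+1) : ℝ) := by ring
lemma choose_le_two_pow' {n k : ℕ} (h : k ≤ n) : Nat.choose n k ≤ 2 ^ n := by
  rw [← Nat.sum_range_choose n]
  exact Finset.single_le_sum (fun _ _ => Nat.zero_le _)
    (Finset.mem_range.mpr (Nat.lt_succ_of_le h))

lemma gevrey_shift {f : PowerSeries ℂ} (hf : GevreyClass f) (n : ℕ) :
    GevreyClass (PowerSeries.mk fun k => PowerSeries.coeff (k + n) f) := by
  rw [gevrey_iff_bnd] at *
  obtain ⟨C, ρ, hC, hρ, hb⟩ := hf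
  refine ⟨C * ρ ^ n * 2 ^ n * (Nat.factorial n : ℝ), 2 * ρ, by positivity, by positivity, fun k => ?_⟩
  rw [PowerSeries.coeff_mk]
  have hfact : ((Nat.factorial (k + n)) : ℝ)
      ≤ 2 ^ (k + n) * (Nat.factorial k : ℝ) * (Nat.factorial n : ℝ) := by
    have h1 : Nat.factorial (k+n) = Nat.choose (k+n) k * Nat.factorial k * Nat.factorial n := by
      have := Nat.choose_mul_factorial_mul_factorial (Nat.le_add_right k n)
      rw [Nat.add_sub_cancel_left] at this
      omega
    rw [h1]
    push_cast
    have h2 : (Nat.choose (k+n) k : ℝ) ≤ 2 ^ (k+n) := by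
      exact_mod_cast choose_le_two_pow' (Nat.le_add_right k n)
    have : (0:ℝ) ≤ (Nat.factorial k : ℝ) * (Nat.factorial n : ℝ) := by positivity
    nlinarith [(Nat.cast_pos (α := ℝ)).mpr (Nat.factorial_pos k),
      (Nat.cast_pos (α := ℝ)).mpr (Nat.factorial_pos n)]
  calc ‖PowerSeries.coeff (k+n) f‖ ≤ C * ρ ^ (k+n) * (Nat.factorial (k+n) : ℝ) := hb (k+n)
    _ ≤ C * ρ ^ (k+n) * (2 ^ (k + n) * (Nat.factorial k : ℝ) * (Nat.factorial n : ℝ)) := by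
        have : (0:ℝ) ≤ C * ρ ^ (k+n) := by positivity
        exact mul_le_mul_of_nonneg_left hfact this
    _ = C * ρ ^ n * 2 ^ n * (Nat.factorial n : ℝ) * (2 * ρ) ^ k * (Nat.factorial k : ℝ) := by
        rw [pow_add, pow_add, mul_pow]
        ring

noncomputable def gevreyS : Subring (PowerSeries ℂ) where
  carrier := {f | GevreyClass f}
  zero_mem' := gevrey_zero
  one_mem' := gevrey_one
  add_mem' := fun hf hg => gevrey_add hf hg
  mul_mem' := fun hf hg => gevrey_mul hf hg
  neg_mem' := fun hf => gevrey_neg hf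

lemma gevreyS_isUnit (g : gevreyS) (h0 : PowerSeries.constantCoeff (g : PowerSeries ℂ) ≠ 0) :
    IsUnit g := by
  have hinv : (↑g : PowerSeries ℂ)⁻¹ ∈ gevreyS := gevrey_inv g.2 h0
  refine ⟨⟨g, ⟨_, hinv⟩, ?_, ?_⟩, rfl⟩
  · exact Subtype.ext (PowerSeries.mul_inv_cancel _ h0)
  · exact Subtype.ext (PowerSeries.inv_mul_cancel _ h0)

lemma gevreyS_X_mem : PowerSeries.X ∈ gevreyS := gevrey_X

lemma gevreyS_X_ne_zero : (⟨PowerSeries.X, gevreyS_X_mem⟩ : gevreyS) ≠ 0 := by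
  intro h
  exact PowerSeries.X_ne_zero (R := ℂ) (congrArg Subtype.val h)

lemma gevreyS_X_not_unit : ¬ IsUnit (⟨PowerSeries.X, gevreyS_X_mem⟩ : gevreyS) := by
  intro h
  obtain ⟨b, hb⟩ := isUnit_iff_exists_inv.mp h
  have h2 : (PowerSeries.X : PowerSeries ℂ) * (b : PowerSeries ℂ) = 1 := congrArg Subtype.val hb
  have h3 := congrArg (PowerSeries.constantCoeff) h2
  simp at h3

lemma gevreyS_X_irreducible : Irreducible (⟨PowerSeries.X, gevreyS_X_mem⟩ : gevreyS) := by
  refine ⟨gevreyS_X_not_unit, fun a b hab => ?_⟩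
  have hab' : (PowerSeries.X : PowerSeries ℂ) = (a : PowerSeries ℂ) * (b : PowerSeries ℂ) :=
    congrArg Subtype.val hab
  have h0 : PowerSeries.constantCoeff (a : PowerSeries ℂ) *
      PowerSeries.constantCoeff (b : PowerSeries ℂ) = 0 := by
    rw [← map_mul, ← hab', PowerSeries.constantCoeff_X]
  rcases mul_eq_zero.mp h0 with ha | hb0
  · -- a has zero constant coefficient, so b is a unit
    right
    obtain ⟨a', ha'⟩ := PowerSeries.X_dvd_iff.mpr ha
    have key : (PowerSeries.X : PowerSeries ℂ) * 1 =
        PowerSeries.X * (a' * (b : PowerSeries ℂ)) := by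
      conv_lhs => rw [mul_one, hab', ha']
      rw [mul_assoc]
    have h1 : (1 : PowerSeries ℂ) = a' * (b : PowerSeries ℂ) :=
      mul_left_cancel₀ PowerSeries.X_ne_zero key
    have hb0' : PowerSeries.constantCoeff (b : PowerSeries ℂ) ≠ 0 := by
      intro hz
      have := congrArg (PowerSeries.constantCoeff) h1
      rw [map_one, map_mul, hz, mul_zero] at this
      exact one_ne_zero this
    exact gevreyS_isUnit b hb0'
  · -- symmetric case
    left
    obtain ⟨b', hb'⟩ := PowerSeries.X_dvd_iff.mpr hb0
    have key : (PowerSeries.X : PowerSeries ℂ) * 1 =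
        PowerSeries.X * (b' * (a : PowerSeries ℂ)) := by
      conv_lhs => rw [mul_one, hab', hb']
      ring
    have h1 : (1 : PowerSeries ℂ) = b' * (a : PowerSeries ℂ) :=
      mul_left_cancel₀ PowerSeries.X_ne_zero key
    have ha0' : PowerSeries.constantCoeff (a : PowerSeries ℂ) ≠ 0 := by
      intro hz
      have := congrArg (PowerSeries.constantCoeff) h1
      rw [map_one, map_mul, hz, mul_zero] at this
      exact one_ne_zero this
    exact gevreyS_isUnit a ha0'

lemma gevreyS_exists_factor (f : gevreyS) (hf : f ≠ 0) :
    ∃ (n : ℕ) (u : gevreySˣ),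
      f = (⟨PowerSeries.X, gevreyS_X_mem⟩ : gevreyS) ^ n * (u : gevreyS) := by
  have hfc : (f : PowerSeries ℂ) ≠ 0 := fun h => hf (Subtype.ext h)
  have hex : ∃ n, PowerSeries.coeff n (f : PowerSeries ℂ) ≠ 0 := by
    by_contra h
    push_neg at h
    exact hfc (PowerSeries.ext fun n => by simpa using h n)
  set n := Nat.find hex with hn
  set g : PowerSeries ℂ := PowerSeries.mk fun k => PowerSeries.coeff (k + n) (f : PowerSeries ℂ)
    with hgdef
  have hgmem : g ∈ gevreyS := gevrey_shift f.2 n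
  have hg0 : PowerSeries.constantCoeff g ≠ 0 := by
    rw [← PowerSeries.coeff_zero_eq_constantCoeff_apply, hgdef, PowerSeries.coeff_mk, zero_add]
    exact Nat.find_spec hex
  have heq : (f : PowerSeries ℂ) = PowerSeries.X ^ n * g := by
    ext m
    rw [PowerSeries.coeff_X_pow_mul']
    split
    · rename_i h
      rw [hgdef, PowerSeries.coeff_mk, Nat.sub_add_cancel h]
    · rename_i h
      by_contra hc
      exact h (Nat.find_le hc)
  obtain ⟨u, hu⟩ := gevreyS_isUnit ⟨g, hgmem⟩ hg0
  refine ⟨n, u, Subtype.ext ?_⟩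
  push_cast [hu]
  rw [heq]

lemma pow_mul_unit_eq_aux {R : Type*} [CommRing R] [IsDomain R] {x : R} (hx : x ≠ 0)
    (hxu : ¬IsUnit x) {n m : ℕ} {u v : Rˣ} (h : x ^ n * u = x ^ m * v) (hnm : n ≤ m) :
    n = m := by
  obtain ⟨d, rfl⟩ := Nat.exists_eq_add_of_le hnm
  rw [pow_add, mul_assoc] at h
  have h2 : (u : R) = x ^ d * v := mul_left_cancel₀ (pow_ne_zero n hx) h
  have hud : IsUnit (x ^ d * (v : R)) := h2 ▸ u.isUnit
  have hxd : IsUnit (x ^ d) := isUnit_of_mul_isUnit_left hud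
  rcases Nat.eq_zero_or_pos d with rfl | hd
  · simp
  · exact absurd ((isUnit_pow_iff (Nat.pos_iff_ne_zero.mp hd)).mp hxd) hxu

lemma pow_mul_unit_unique {R : Type*} [CommRing R] [IsDomain R] {x : R} (hx : x ≠ 0)
    (hxu : ¬IsUnit x) {n m : ℕ} {u v : Rˣ} (h : x ^ n * u = x ^ m * v) :
    (n, u) = (m, v) := by
  have hnm : n = m := by
    rcases le_total n m with h' | h'
    · exact pow_mul_unit_eq_aux hx hxu h h'
    · exact (pow_mul_unit_eq_aux hx hxu h.symm h').symm
  subst hnm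
  have h2 : (u : R) = v := mul_left_cancel₀ (pow_ne_zero n hx) h
  rw [Units.ext h2]

/-- The ring `𝒢` of Gevrey-class formal power series (the model of the
ring `ℂ{{∂ₜ⁻¹}}` of microdifferential operators with constant coefficients) is a discrete
valuation ring: a local principal ideal domain, with maximal ideal generated by `X`, and
every nonzero element is uniquely `Xⁿ·u` with `n ∈ ℕ` and `u` a unit. -/
theorem gevreyClass_discreteValuationRing :
    ∃ S : Subring (PowerSeries ℂ), (∀ f : PowerSeries ℂ, f ∈ S ↔ GevreyClass f) ∧
      ∃ hX : PowerSeries.X ∈ S,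
        ∃ hdvr : IsDiscreteValuationRing ↥S,
          (@IsLocalRing.maximalIdeal ↥S _ hdvr.toIsLocalRing =
            Ideal.span {(⟨PowerSeries.X, hX⟩ : ↥S)}) ∧
          ∀ f : ↥S, f ≠ 0 →
            ∃! nu : ℕ × (↥S)ˣ,
              f = (⟨PowerSeries.X, hX⟩ : ↥S) ^ nu.1 * (nu.2 : ↥S) := by
  refine ⟨gevreyS, fun f => Iff.rfl, gevreyS_X_mem, ?_⟩
  have hdvr : IsDiscreteValuationRing ↥gevreyS :=
    IsDiscreteValuationRing.ofHasUnitMulPowIrreducibleFactorization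
      ⟨⟨PowerSeries.X, gevreyS_X_mem⟩, gevreyS_X_irreducible, fun {x} hx => by
        obtain ⟨n, u, h⟩ := gevreyS_exists_factor x hx
        exact ⟨n, ⟨u, h.symm⟩⟩⟩
  refine ⟨hdvr, ?_, ?_⟩
  · exact (IsDiscreteValuationRing.irreducible_iff_uniformizer _).mp gevreyS_X_irreducible
  · intro f hf
    obtain ⟨n, u, h⟩ := gevreyS_exists_factor f hf
    refine ⟨(n, u), h, ?_⟩
    rintro ⟨m, v⟩ hmv
    exact pow_mul_unit_unique gevreyS_X_ne_zero gevreyS_X_not_unit (hmv.symm.trans h)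
end

section
/- The set ℂ{X} of formal power series ∑_{k≥0} a_k X^k ∈ ℂ[[X]] for which there exists r > 0 such that ∑_{k≥0} ‖a_k‖·r^k is summable (i.e., power series with positive radius of convergence) is a subring of ℂ[[X]], and this ring of convergent power series is a discrete valuation ring: a local principal ideal domain whose maximal ideal is generated by X, every nonzero element being X^n·u with u a unit. -/
/-- A formal power series `f = ∑ aₖ Xᵏ ∈ ℂ[[X]]` is *convergent* (has positive radius of
convergence) if there is `r > 0` such that `∑ ‖aₖ‖·rᵏ` is summable (the model of `ℂ{t}`). -/
def ConvergentSeries (f : PowerSeries ℂ) : Prop :=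
  ∃ r : ℝ, 0 < r ∧ Summable fun k : ℕ => ‖PowerSeries.coeff k f‖ * r ^ k

open PowerSeries Finset
set_option maxHeartbeats 1000000

namespace ConvAux

lemma mono {f : PowerSeries ℂ} {r s : ℝ} (hs : 0 < s) (hsr : s ≤ r)
    (h : Summable fun k : ℕ => ‖PowerSeries.coeff k f‖ * r ^ k) :
    Summable fun k : ℕ => ‖PowerSeries.coeff k f‖ * s ^ k := by
  refine h.of_nonneg_of_le (fun k => by positivity) (fun k => ?_)
  exact mul_le_mul_of_nonneg_left (pow_le_pow_left₀ hs.le hsr k) (norm_nonneg _)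

lemma zero_mem' : ConvergentSeries 0 := ⟨1, one_pos, by simpa using summable_zero⟩

lemma one_mem' : ConvergentSeries 1 := by
  refine ⟨1, one_pos, ?_⟩
  have : (fun k : ℕ => ‖PowerSeries.coeff k (1 : PowerSeries ℂ)‖ * (1:ℝ) ^ k)
      = fun k => if k = 0 then 1 else 0 := by
    funext k; by_cases h : k = 0 <;> simp [PowerSeries.coeff_one, h]
  rw [this]
  exact summable_of_ne_finset_zero (s := {0}) (fun k hk => by simp at hk; simp [hk])

lemma neg_mem' {f : PowerSeries ℂ} (hf : ConvergentSeries f) : ConvergentSeries (-f) := by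
  obtain ⟨r, hr, h⟩ := hf
  exact ⟨r, hr, by simpa using h⟩

lemma add_mem' {f g : PowerSeries ℂ} (hf : ConvergentSeries f) (hg : ConvergentSeries g) :
    ConvergentSeries (f + g) := by
  obtain ⟨r, hr, h1⟩ := hf
  obtain ⟨s, hs, h2⟩ := hg
  refine ⟨min r s, lt_min hr hs, ?_⟩
  have h1' := mono (lt_min hr hs) (min_le_left r s) h1
  have h2' := mono (lt_min hr hs) (min_le_right r s) h2
  refine (h1'.add h2').of_nonneg_of_le (fun k => by positivity) (fun k => ?_)
  simp only [map_add]
  calc ‖PowerSeries.coeff k f + PowerSeries.coeff k g‖ * min r s ^ k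
      ≤ (‖PowerSeries.coeff k f‖ + ‖PowerSeries.coeff k g‖) * min r s ^ k := by
        exact mul_le_mul_of_nonneg_right (norm_add_le _ _) (by positivity)
    _ = _ := by ring

lemma mul_mem' {f g : PowerSeries ℂ} (hf : ConvergentSeries f) (hg : ConvergentSeries g) :
    ConvergentSeries (f * g) := by
  obtain ⟨r, hr, h1⟩ := hf
  obtain ⟨s, hs, h2⟩ := hg
  set t := min r s with ht
  have htpos : (0:ℝ) < t := lt_min hr hs
  have h1' := mono htpos (min_le_left r s) h1
  have h2' := mono htpos (min_le_right r s) h2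
  refine ⟨t, htpos, ?_⟩
  set F : ℕ → ℂ := fun k => PowerSeries.coeff k f * (t : ℂ) ^ k with hF
  set G : ℕ → ℂ := fun k => PowerSeries.coeff k g * (t : ℂ) ^ k with hG
  have hnormt : ∀ k : ℕ, ‖(t : ℂ) ^ k‖ = t ^ k := by
    intro k; rw [norm_pow, Complex.norm_real, Real.norm_of_nonneg htpos.le]
  have hFs : Summable fun k => ‖F k‖ := by
    refine h1'.congr fun k => ?_
    rw [hF]; rw [norm_mul, hnormt]
  have hGs : Summable fun k => ‖G k‖ := by
    refine h2'.congr fun k => ?_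
    rw [hG]; rw [norm_mul, hnormt]
  have key := summable_norm_sum_mul_antidiagonal_of_summable_norm hFs hGs
  refine key.congr fun n => ?_
  have : ∑ kl ∈ Finset.HasAntidiagonal.antidiagonal n, F kl.1 * G kl.2
      = (PowerSeries.coeff n (f * g)) * (t : ℂ) ^ n := by
    rw [PowerSeries.coeff_mul, Finset.sum_mul]
    refine Finset.sum_congr rfl fun kl hkl => ?_
    rw [Finset.HasAntidiagonal.mem_antidiagonal] at hkl
    rw [hF, hG]
    simp only
    rw [← hkl, pow_add]; ring
  rw [this, norm_mul, hnormt]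


lemma inv_mem {f : PowerSeries ℂ} (hf : ConvergentSeries f)
    (h0 : PowerSeries.constantCoeff f ≠ 0) : ConvergentSeries f⁻¹ := by
  obtain ⟨r0, hr0, hsum⟩ := hf
  set a : ℕ → ℂ := fun k => PowerSeries.coeff k f with ha
  set b : ℕ → ℂ := fun k => PowerSeries.coeff k f⁻¹ with hb
  have ha0 : a 0 ≠ 0 := by
    simpa [ha, PowerSeries.coeff_zero_eq_constantCoeff] using h0
  have ha0pos : (0:ℝ) < ‖a 0‖ := norm_pos_iff.2 ha0
  have key : f * f⁻¹ = 1 := PowerSeries.mul_inv_cancel f h0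
  -- tail sum at r0
  have hT : Summable (fun k : ℕ => ‖a (k+1)‖ * r0 ^ (k+1)) := by
    exact (summable_nat_add_iff 1).2 hsum
  set T : ℝ := ∑' k : ℕ, ‖a (k+1)‖ * r0 ^ (k+1) with hTdef
  have hTnn : 0 ≤ T := tsum_nonneg (fun k => by positivity)
  set ε : ℝ := ‖a 0‖ / 2 with hε
  have hεpos : 0 < ε := by positivity
  set c : ℝ := ε / (T + ε) with hc
  have hcpos : 0 < c := div_pos hεpos (by linarith)
  have hc1 : c ≤ 1 := by
    rw [hc, div_le_one (by linarith)]; linarith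
  set r : ℝ := c * r0 with hr
  have hrpos : 0 < r := mul_pos hcpos hr0
  have hrr0 : r ≤ r0 := by
    calc r = c * r0 := rfl
    _ ≤ 1 * r0 := by exact mul_le_mul_of_nonneg_right hc1 hr0.le
    _ = r0 := one_mul r0
  have hsumr : Summable fun k : ℕ => ‖a k‖ * r ^ k := mono hrpos hrr0 hsum
  have hTr : Summable (fun k : ℕ => ‖a (k+1)‖ * r ^ (k+1)) :=
    (summable_nat_add_iff 1).2 hsumr
  -- tail bound
  have htail : (∑' k : ℕ, ‖a (k+1)‖ * r ^ (k+1)) ≤ ε := by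
    have hle : ∀ k : ℕ, ‖a (k+1)‖ * r ^ (k+1) ≤ c * (‖a (k+1)‖ * r0 ^ (k+1)) := by
      intro k
      have : r ^ (k+1) = c ^ (k+1) * r0 ^ (k+1) := by rw [hr, mul_pow]
      rw [this]
      have hck : c ^ (k+1) ≤ c := by
        calc c ^ (k+1) = c * c ^ k := by ring
        _ ≤ c * 1 := by
            exact mul_le_mul_of_nonneg_left (pow_le_one₀ hcpos.le hc1) hcpos.le
        _ = c := mul_one c
      calc ‖a (k+1)‖ * (c ^ (k+1) * r0 ^ (k+1))
          ≤ ‖a (k+1)‖ * (c * r0 ^ (k+1)) := by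
            refine mul_le_mul_of_nonneg_left ?_ (norm_nonneg _)
            exact mul_le_mul_of_nonneg_right hck (by positivity)
        _ = c * (‖a (k+1)‖ * r0 ^ (k+1)) := by ring
    calc (∑' k : ℕ, ‖a (k+1)‖ * r ^ (k+1))
        ≤ ∑' k : ℕ, c * (‖a (k+1)‖ * r0 ^ (k+1)) := Summable.tsum_le_tsum hle hTr (hT.mul_left c)
      _ = c * T := by rw [tsum_mul_left]
      _ ≤ ε := by
          rw [hc, div_mul_eq_mul_div, div_le_iff₀ (by linarith)]
          nlinarith
  -- the inductive bound
  set B : ℕ → ℝ := fun n => ‖b n‖ * r ^ n with hB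
  have hBnn : ∀ n, 0 ≤ B n := fun n => by positivity
  have claim : ∀ n, B n ≤ B 0 := by
    intro n
    induction n using Nat.strong_induction_on with
    | _ n ih =>
      match n with
      | 0 => exact le_rfl
      | Nat.succ n =>
        have hcoeff : PowerSeries.coeff (n+1) (f * f⁻¹) = 0 := by
          rw [key]; simp [PowerSeries.coeff_one]
        rw [PowerSeries.coeff_mul,
          Finset.Nat.sum_antidiagonal_eq_sum_range_succ_mk] at hcoeff
        rw [Finset.sum_range_succ'] at hcoeff
        simp only [Nat.succ_sub_succ, Nat.sub_zero] at hcoeff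
        have heq : a 0 * b (n+1) = -∑ i ∈ Finset.range (n+1), a (i+1) * b (n - i) := by
          rw [eq_neg_iff_add_eq_zero, add_comm]
          exact hcoeff
        have hnorm : ‖a 0‖ * ‖b (n+1)‖ ≤ ∑ i ∈ Finset.range (n+1), ‖a (i+1)‖ * ‖b (n - i)‖ := by
          rw [← norm_mul, heq, norm_neg]
          exact (norm_sum_le _ _).trans (le_of_eq (Finset.sum_congr rfl fun i _ => norm_mul _ _))
        have hmul : ‖a 0‖ * B (n+1)
            ≤ ∑ i ∈ Finset.range (n+1), (‖a (i+1)‖ * r ^ (i+1)) * (‖b (n-i)‖ * r ^ (n-i)) := by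
          have h1 : ‖a 0‖ * B (n+1) = (‖a 0‖ * ‖b (n+1)‖) * r ^ (n+1) := by
            rw [hB]; ring
          rw [h1]
          calc (‖a 0‖ * ‖b (n+1)‖) * r ^ (n+1)
              ≤ (∑ i ∈ Finset.range (n+1), ‖a (i+1)‖ * ‖b (n - i)‖) * r ^ (n+1) :=
                mul_le_mul_of_nonneg_right hnorm (by positivity)
            _ = _ := by
                rw [Finset.sum_mul]
                refine Finset.sum_congr rfl fun i hi => ?_
                rw [Finset.mem_range] at hi
                have : (i+1) + (n-i) = n+1 := by omega
                rw [← this, pow_add]; ring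
        have hstep : ‖a 0‖ * B (n+1) ≤ ε * B 0 := by
          refine hmul.trans ?_
          calc ∑ i ∈ Finset.range (n+1), (‖a (i+1)‖ * r ^ (i+1)) * (‖b (n-i)‖ * r ^ (n-i))
              ≤ ∑ i ∈ Finset.range (n+1), (‖a (i+1)‖ * r ^ (i+1)) * B 0 := by
                refine Finset.sum_le_sum fun i hi => ?_
                refine mul_le_mul_of_nonneg_left ?_ (by positivity)
                exact ih (n - i) (by omega)
            _ = (∑ i ∈ Finset.range (n+1), ‖a (i+1)‖ * r ^ (i+1)) * B 0 := by
                rw [Finset.sum_mul]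
            _ ≤ ε * B 0 := by
                refine mul_le_mul_of_nonneg_right ?_ (hBnn 0)
                refine le_trans ?_ htail
                exact Summable.sum_le_tsum _ (fun k _ => by positivity) hTr

        have : B (n+1) ≤ (ε * B 0) / ‖a 0‖ := by
          rw [le_div_iff₀ ha0pos]; linarith [hstep]
        refine this.trans ?_
        rw [hε]
        rw [div_le_iff₀ ha0pos]
        nlinarith [hBnn 0, ha0pos]
  -- conclude with radius r/2
  refine ⟨r / 2, by positivity, ?_⟩
  have hgeom : Summable fun n : ℕ => B 0 * (1/2 : ℝ) ^ n :=
    (summable_geometric_of_lt_one (by norm_num) (by norm_num)).mul_left _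
  refine hgeom.of_nonneg_of_le (fun n => by positivity) (fun n => ?_)
  have : ‖b n‖ * (r/2) ^ n = B n * (1/2) ^ n := by
    rw [hB]; rw [div_pow]
    field_simp
    rw [mul_assoc, ← mul_pow]; norm_num
  rw [this]
  exact mul_le_mul_of_nonneg_right (claim n) (by positivity)


noncomputable def S : Subring (PowerSeries ℂ) where
  carrier := {f | ConvergentSeries f}
  zero_mem' := zero_mem'
  one_mem' := one_mem'
  neg_mem' := neg_mem'
  add_mem' := add_mem'
  mul_mem' := mul_mem'

lemma mem_S_iff (f : PowerSeries ℂ) : f ∈ S ↔ ConvergentSeries f := Iff.rfl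

lemma X_mem : (PowerSeries.X : PowerSeries ℂ) ∈ S := by
  rw [mem_S_iff]
  refine ⟨1, one_pos, ?_⟩
  have : (fun k : ℕ => ‖PowerSeries.coeff k (PowerSeries.X : PowerSeries ℂ)‖ * (1:ℝ) ^ k)
      = fun k => if k = 1 then 1 else 0 := by
    funext k; by_cases h : k = 1 <;> simp [PowerSeries.coeff_X, h]
  rw [this]
  exact summable_of_ne_finset_zero (s := {1}) (fun k hk => by simp at hk; simp [hk])

/-- key unit criterion -/
lemma isUnit_S {f : PowerSeries ℂ} (hf : f ∈ S)
    (h0 : PowerSeries.constantCoeff f ≠ 0) : IsUnit (⟨f, hf⟩ : S) := by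
  have hinv : f⁻¹ ∈ S := inv_mem hf h0
  refine ⟨⟨⟨f, hf⟩, ⟨f⁻¹, hinv⟩, ?_, ?_⟩, rfl⟩
  · exact Subtype.ext (PowerSeries.mul_inv_cancel f h0)
  · exact Subtype.ext (by
      show f⁻¹ * f = 1
      rw [mul_comm]; exact PowerSeries.mul_inv_cancel f h0)

lemma isUnit_S' (f : ↥S) (h0 : PowerSeries.constantCoeff (f : PowerSeries ℂ) ≠ 0) :
    IsUnit f := by
  have := isUnit_S f.2 h0
  simpa using this

lemma constantCoeff_ne_zero_of_isUnit {f : ↥S} (h : IsUnit f) :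
    PowerSeries.constantCoeff (f : PowerSeries ℂ) ≠ 0 := by
  have hu : IsUnit (f : PowerSeries ℂ) := h.map S.subtype
  rw [PowerSeries.isUnit_iff_constantCoeff] at hu
  exact hu.ne_zero

lemma X_irred : Irreducible (⟨PowerSeries.X, X_mem⟩ : S) := by
  constructor
  · intro h
    have := constantCoeff_ne_zero_of_isUnit h
    simp [PowerSeries.constantCoeff_X] at this
  · intro a b hab
    have hX : (PowerSeries.X : PowerSeries ℂ) = (a : PowerSeries ℂ) * b := by
      have := congrArg (Subtype.val) hab
      push_cast at this
      exact this
    rcases (PowerSeries.X_irreducible.isUnit_or_isUnit hX) with h | h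
    · left
      refine isUnit_S' a ?_
      rw [PowerSeries.isUnit_iff_constantCoeff] at h
      exact h.ne_zero
    · right
      refine isUnit_S' b ?_
      rw [PowerSeries.isUnit_iff_constantCoeff] at h
      exact h.ne_zero

lemma exists_pow_mul_unit (f : ↥S) (hf : f ≠ 0) :
    ∃ (n : ℕ) (u : (↥S)ˣ), f = (⟨PowerSeries.X, X_mem⟩ : S) ^ n * (u : ↥S) := by
  set φ : PowerSeries ℂ := (f : PowerSeries ℂ) with hφdef
  have hφ : φ ≠ 0 := fun h => hf (Subtype.ext h)
  have hex : ∃ k, PowerSeries.coeff k φ ≠ 0 := by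
    by_contra h
    push_neg at h
    exact hφ (PowerSeries.ext fun k => by simp [h k])
  set n := Nat.find hex with hn
  have hncoeff : PowerSeries.coeff n φ ≠ 0 := Nat.find_spec hex
  have hlt : ∀ m < n, PowerSeries.coeff m φ = 0 := by
    intro m hm
    by_contra h
    exact Nat.find_min hex hm h
  obtain ⟨g, hg⟩ : (PowerSeries.X : PowerSeries ℂ) ^ n ∣ φ :=
    PowerSeries.X_pow_dvd_iff.2 hlt
  have hcoeffg : ∀ k, PowerSeries.coeff k g = PowerSeries.coeff (k + n) φ := by
    intro k; rw [hg, PowerSeries.coeff_X_pow_mul]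
  have hg0 : PowerSeries.constantCoeff g ≠ 0 := by
    have := hcoeffg 0
    rw [zero_add] at this
    rw [← PowerSeries.coeff_zero_eq_constantCoeff_apply, this]
    exact hncoeff
  have hgS : g ∈ S := by
    obtain ⟨r, hr, hs⟩ := f.2
    refine ⟨r, hr, ?_⟩
    have h1 : Summable fun k : ℕ => ‖PowerSeries.coeff (k + n) φ‖ * r ^ (k + n) :=
      (summable_nat_add_iff n).2 hs
    refine (h1.mul_left ((r ^ n)⁻¹)).congr fun k => ?_
    rw [hcoeffg k, pow_add]
    field_simp
  obtain ⟨u, hu⟩ := isUnit_S hgS hg0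
  refine ⟨n, u, ?_⟩
  apply Subtype.ext
  have hval : ((u : ↥S) : PowerSeries ℂ) = g := by rw [hu]
  push_cast
  rw [hval, ← hg]

noncomputable instance : IsDomain ↥S := inferInstance

lemma hasFact : IsDiscreteValuationRing.HasUnitMulPowIrreducibleFactorization ↥S := by
  refine ⟨⟨PowerSeries.X, X_mem⟩, X_irred, ?_⟩
  intro x hx
  obtain ⟨n, u, hu⟩ := exists_pow_mul_unit x hx
  exact ⟨n, ⟨u, by rw [hu, mul_comm]⟩⟩

noncomputable def dvr : IsDiscreteValuationRing ↥S :=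
  IsDiscreteValuationRing.ofHasUnitMulPowIrreducibleFactorization hasFact

end ConvAux

/-- The set `ℂ{X}` of convergent power series is a subring of `ℂ[[X]]`,
and this ring is a discrete valuation ring: a local principal ideal domain whose maximal
ideal is generated by `X`, every nonzero element being `Xⁿ·u` with `u` a unit. -/
theorem convergentSeries_subring_discreteValuationRing :
    ∃ S : Subring (PowerSeries ℂ), (∀ f : PowerSeries ℂ, f ∈ S ↔ ConvergentSeries f) ∧
      ∃ hX : PowerSeries.X ∈ S,
        ∃ hdvr : IsDiscreteValuationRing ↥S,
          (@IsLocalRing.maximalIdeal ↥S _ hdvr.toIsLocalRing =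
            Ideal.span {(⟨PowerSeries.X, hX⟩ : ↥S)}) ∧
          ∀ f : ↥S, f ≠ 0 →
            ∃ (n : ℕ) (u : (↥S)ˣ),
              f = (⟨PowerSeries.X, hX⟩ : ↥S) ^ n * (u : ↥S) := by
  refine ⟨ConvAux.S, fun f => Iff.rfl, ConvAux.X_mem, ConvAux.dvr, ?_, ConvAux.exists_pow_mul_unit⟩
  haveI := ConvAux.dvr
  ext x
  rw [IsLocalRing.mem_maximalIdeal, Ideal.mem_span_singleton]
  constructor
  · intro hx
    by_cases h0 : x = 0
    · exact h0 ▸ dvd_zero _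
    · obtain ⟨n, u, hu⟩ := ConvAux.exists_pow_mul_unit x h0
      match n with
      | 0 =>
        exfalso
        apply hx
        rw [hu, pow_zero, one_mul]
        exact u.isUnit
      | n + 1 =>
        exact ⟨(⟨PowerSeries.X, ConvAux.X_mem⟩ : ConvAux.S) ^ n * u, by rw [hu]; ring⟩
  · intro hdvd hunit
    exact ConvAux.X_irred.not_isUnit (isUnit_of_dvd_unit hdvd hunit)
end
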